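/- arXiv:2106.07620 — 8 statements merged into one kernel-verified Lean document; each statement's English description precedes it below -/
import Mathlib

section
/- Let n ≥ 1 and let K : ℝ × ℝⁿ × ℝⁿ × ℝ → ℝ, (q⁰, q, γ, t) ↦ K(q⁰, q, γ, t), be continuously differentiable. Define H(q⁰, q, p₀, p, t) = −p₀ · K(q⁰, q, −p/p₀, t) on the region p₀ ≠ 0. Suppose q⁰, p₀ : I → ℝ and q, p : I → ℝⁿ are differentiable on an open interval I ⊆ ℝ, with p₀(t) ≠ 0 for all t ∈ I, and they satisfy Hamilton's canonical equations for H: (d/dt)q⁰ = ∂H/∂p₀, (d/dt)qᵃ = ∂H/∂pₐ, (d/dt)p₀ = −∂H/∂q⁰, (d/dt)pₐ = −∂H/∂qᵃ (partial derivatives evaluated at (q⁰(t), q(t), p₀(t), p(t), t)). Then the curve γ(t) := −p(t)/p₀(t) satisfies the non-autonomous contact Hamiltonian equations associated with K: (d/dt)qᵃ = ∂K/∂γₐ, (d/dt)γₐ = −∂K/∂qᵃ − γₐ · ∂K/∂q⁰ for a = 1, …, n, and (d/dt)q⁰ = −K + Σₐ γₐ · ∂K/∂γₐ, where K and its partial derivatives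 are evaluated at (q⁰(t), q(t), γ(t), t). -/
private lemma upd_hasDerivAt {n : ℕ} (v : Fin n → ℝ) (a : Fin n) (s : ℝ) :
    HasDerivAt (fun s : ℝ => Function.update v a s) (Pi.single a 1) s := by
  rw [hasDerivAt_pi]
  intro j
  by_cases hj : j = a
  · subst hj
    simpa [Function.update_apply] using hasDerivAt_id' s
  · simp only [Function.update_of_ne hj, Pi.single_eq_of_ne hj]
    exact hasDerivAt_const s _

/-- **Symplectization induces contact dynamics (Proposition 1).**
If `(q⁰, q, p₀, p)` solves Hamilton's canonical equations for
`H(q⁰, q, p₀, p, t) = -p₀ · K(q⁰, q, -p/p₀, t)` with `p₀ ≠ 0`, then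
`(q⁰, q, γ) := (q⁰, q, -p/p₀)` solves the non-autonomous contact Hamiltonian
equations associated with `K`. -/
theorem symplectization_induces_contact_dynamics
    (n : ℕ) (hn : 1 ≤ n)
    (K : ℝ → (Fin n → ℝ) → (Fin n → ℝ) → ℝ → ℝ)
    (hK : ContDiff ℝ 1 (fun x : ℝ × (Fin n → ℝ) × (Fin n → ℝ) × ℝ =>
      K x.1 x.2.1 x.2.2.1 x.2.2.2))
    (α β : ℝ) (q0 p0 : ℝ → ℝ) (q p : ℝ → Fin n → ℝ)
    (hp0ne : ∀ t ∈ Set.Ioo α β, p0 t ≠ 0)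
    -- Hamilton's equation  (d/dt)q⁰ = ∂H/∂p₀ :
    (hq0 : ∀ t ∈ Set.Ioo α β, HasDerivAt q0
      (deriv (fun s : ℝ => -s * K (q0 t) (q t) (fun i => -(p t i) / s) t) (p0 t)) t)
    -- Hamilton's equation  (d/dt)qᵃ = ∂H/∂pₐ :
    (hq : ∀ t ∈ Set.Ioo α β, ∀ a : Fin n, HasDerivAt (fun s => q s a)
      (deriv (fun s : ℝ => -(p0 t) * K (q0 t) (q t)
        (fun j => -(Function.update (p t) a s j) / p0 t) t) (p t a)) t)
    -- Hamilton's equation  (d/dt)p₀ = -∂H/∂q⁰ :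
    (hp0 : ∀ t ∈ Set.Ioo α β, HasDerivAt p0
      (-(deriv (fun s : ℝ => -(p0 t) * K s (q t) (fun j => -(p t j) / p0 t) t) (q0 t))) t)
    -- Hamilton's equation  (d/dt)pₐ = -∂H/∂qᵃ :
    (hp : ∀ t ∈ Set.Ioo α β, ∀ a : Fin n, HasDerivAt (fun s => p s a)
      (-(deriv (fun s : ℝ => -(p0 t) * K (q0 t) (Function.update (q t) a s)
        (fun j => -(p t j) / p0 t) t) (q t a))) t) :
    ∀ t ∈ Set.Ioo α β,
      -- (d/dt)qᵃ = ∂K/∂γₐ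
      (∀ a : Fin n, HasDerivAt (fun s => q s a)
        (deriv (fun s : ℝ => K (q0 t) (q t)
            (Function.update (fun j => -(p t j) / p0 t) a s) t)
          (-(p t a) / p0 t)) t) ∧
      -- (d/dt)γₐ = -∂K/∂qᵃ - γₐ · ∂K/∂q⁰
      (∀ a : Fin n, HasDerivAt (fun s => -(p s a) / p0 s)
        (-(deriv (fun s : ℝ => K (q0 t) (Function.update (q t) a s)
              (fun j => -(p t j) / p0 t) t) (q t a))
          - (-(p t a) / p0 t) *
            deriv (fun s : ℝ => K s (q t) (fun j => -(p t j) / p0 t) t) (q0 t)) t) ∧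
      -- (d/dt)q⁰ = -K + Σₐ γₐ ∂K/∂γₐ
      HasDerivAt q0
        (-(K (q0 t) (q t) (fun j => -(p t j) / p0 t) t)
          + ∑ a : Fin n, (-(p t a) / p0 t) *
            deriv (fun s : ℝ => K (q0 t) (q t)
                (Function.update (fun j => -(p t j) / p0 t) a s) t)
              (-(p t a) / p0 t)) t := by
  intro t ht
  have hne : p0 t ≠ 0 := hp0ne t ht
  set E := ℝ × (Fin n → ℝ) × (Fin n → ℝ) × ℝ with hE
  set F : E → ℝ := fun x => K x.1 x.2.1 x.2.2.1 x.2.2.2 with hF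
  set z : E := (q0 t, q t, fun j => -(p t j) / p0 t, t) with hz
  have hFd : HasFDerivAt F (fderiv ℝ F z) z := ((hK.differentiable one_ne_zero) z).hasFDerivAt
  set L := fderiv ℝ F z with hL
  -- atoms
  set C : ℝ := L ((1:ℝ), (0:Fin n → ℝ), (0:Fin n → ℝ), (0:ℝ)) with hC
  set B : Fin n → ℝ := fun a => L ((0:ℝ), (Pi.single a 1 : Fin n → ℝ), (0:Fin n → ℝ), (0:ℝ)) with hB
  set A : Fin n → ℝ := fun a => L ((0:ℝ), (0:Fin n → ℝ), (Pi.single a 1 : Fin n → ℝ), (0:ℝ)) with hA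
  -- linearity helpers
  have hsingle : ∀ (c : ℝ) (a : Fin n),
      L ((0:ℝ), (0:Fin n → ℝ), (Pi.single a c : Fin n → ℝ), (0:ℝ)) = c * A a := by
    intro c a
    have h : ((0:ℝ), (0:Fin n → ℝ), (Pi.single a c : Fin n → ℝ), (0:ℝ))
        = c • ((0:ℝ), (0:Fin n → ℝ), (Pi.single a 1 : Fin n → ℝ), (0:ℝ)) := by
      simp [Prod.ext_iff]
      funext j
      by_cases hj : j = a <;> simp [hj, Pi.single_apply]
    rw [h, map_smul, smul_eq_mul, hA]
  have hsumL : ∀ (w : Fin n → ℝ),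
      L ((0:ℝ), (0:Fin n → ℝ), w, (0:ℝ)) = ∑ a : Fin n, w a * A a := by
    intro w
    have h : ((0:ℝ), (0:Fin n → ℝ), w, (0:ℝ))
        = ∑ a : Fin n, ((0:ℝ), (0:Fin n → ℝ), (Pi.single a (w a) : Fin n → ℝ), (0:ℝ)) := by
      simp [Prod.ext_iff, Prod.fst_sum, Prod.snd_sum, Finset.univ_sum_single]
    rw [h, map_sum]
    exact Finset.sum_congr rfl fun a _ => hsingle (w a) a
  -- ∂K/∂γₐ facts (goal-side)
  have hGa : ∀ a : Fin n, HasDerivAt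
      (fun s : ℝ => K (q0 t) (q t) (Function.update (fun j => -(p t j) / p0 t) a s) t)
      (A a) (-(p t a) / p0 t) := by
    intro a
    have hc : HasDerivAt
        (fun s : ℝ => ((q0 t, q t, Function.update (fun j => -(p t j) / p0 t) a s, t) : E))
        (((0:ℝ), (0:Fin n → ℝ), (Pi.single a 1 : Fin n → ℝ), (0:ℝ)))
        (-(p t a) / p0 t) :=
      (hasDerivAt_const _ _).prodMk ((hasDerivAt_const _ _).prodMk
        ((upd_hasDerivAt _ a _).prodMk (hasDerivAt_const _ _)))
    have hFd' : HasFDerivAt F L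
        ((fun s : ℝ => ((q0 t, q t, Function.update (fun j => -(p t j) / p0 t) a s, t) : E))
          (-(p t a) / p0 t)) := by
      have : Function.update (fun j => -(p t j) / p0 t) a (-(p t a) / p0 t)
          = fun j => -(p t j) / p0 t := Function.update_eq_self a _
      simpa [this] using hFd
    exact hFd'.comp_hasDerivAt _ hc
  -- ∂K/∂qᵃ facts (goal-side)
  have hBa : ∀ a : Fin n, HasDerivAt
      (fun s : ℝ => K (q0 t) (Function.update (q t) a s) (fun j => -(p t j) / p0 t) t)
      (B a) (q t a) := by
    intro a
    have hc : HasDerivAt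
        (fun s : ℝ => ((q0 t, Function.update (q t) a s, fun j => -(p t j) / p0 t, t) : E))
        (((0:ℝ), (Pi.single a 1 : Fin n → ℝ), (0:Fin n → ℝ), (0:ℝ))) (q t a) :=
      (hasDerivAt_const _ _).prodMk ((upd_hasDerivAt _ a _).prodMk
        ((hasDerivAt_const _ _).prodMk (hasDerivAt_const _ _)))
    have hFd' : HasFDerivAt F L
        ((fun s : ℝ => ((q0 t, Function.update (q t) a s, fun j => -(p t j) / p0 t, t) : E))
          (q t a)) := by
      simpa [Function.update_eq_self] using hFd
    exact hFd'.comp_hasDerivAt _ hc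
  -- ∂K/∂q⁰ fact (goal-side)
  have hCa : HasDerivAt (fun s : ℝ => K s (q t) (fun j => -(p t j) / p0 t) t) C (q0 t) := by
    have hc : HasDerivAt (fun s : ℝ => ((s, q t, fun j => -(p t j) / p0 t, t) : E))
        (((1:ℝ), (0:Fin n → ℝ), (0:Fin n → ℝ), (0:ℝ))) (q0 t) :=
      (hasDerivAt_id _).prodMk ((hasDerivAt_const _ _).prodMk
        ((hasDerivAt_const _ _).prodMk (hasDerivAt_const _ _)))
    exact hFd.comp_hasDerivAt _ hc
  -- q-equation: (d/dt) qᵃ = A a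
  have hq' : ∀ a : Fin n, HasDerivAt (fun s => q s a) (A a) t := by
    intro a
    have hc3 : HasDerivAt (fun s : ℝ => fun j => -(Function.update (p t) a s j) / p0 t)
        (Pi.single a (-(p0 t)⁻¹)) (p t a) := by
      rw [hasDerivAt_pi]
      intro j
      by_cases hj : j = a
      · subst hj
        simp only [Function.update_self, Pi.single_eq_same]
        simpa [neg_div, one_div, id_eq] using ((hasDerivAt_id (p t j)).neg.div_const (p0 t))
      · simp only [Function.update_of_ne hj, Pi.single_eq_of_ne hj]
        exact hasDerivAt_const _ _
    have hcurve : HasDerivAt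
        (fun s : ℝ => ((q0 t, q t, fun j => -(Function.update (p t) a s j) / p0 t, t) : E))
        (((0:ℝ), (0:Fin n → ℝ), (Pi.single a (-(p0 t)⁻¹) : Fin n → ℝ), (0:ℝ))) (p t a) :=
      (hasDerivAt_const _ _).prodMk ((hasDerivAt_const _ _).prodMk
        (hc3.prodMk (hasDerivAt_const _ _)))
    have hFd' : HasFDerivAt F L
        ((fun s : ℝ => ((q0 t, q t, fun j => -(Function.update (p t) a s j) / p0 t, t) : E))
          (p t a)) := by
      simpa [Function.update_eq_self] using hFd
    have hcomp := hFd'.comp_hasDerivAt _ hcurve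
    have hmul := hcomp.const_mul (-(p0 t))
    rw [hsingle] at hmul
    have hDeriv : deriv (fun s : ℝ => -(p0 t) * K (q0 t) (q t)
        (fun j => -(Function.update (p t) a s j) / p0 t) t) (p t a)
        = -(p0 t) * (-(p0 t)⁻¹ * A a) := hmul.deriv
    have := hq t ht a
    rw [hDeriv] at this
    have hval : -(p0 t) * (-(p0 t)⁻¹ * A a) = A a := by field_simp
    rwa [hval] at this
  -- p0-equation: (d/dt) p0 = p0 · C
  have hp0' : HasDerivAt p0 (p0 t * C) t := by
    have hmul := hCa.const_mul (-(p0 t))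
    have := hp0 t ht
    rw [hmul.deriv] at this
    have hval : -(-(p0 t) * C) = p0 t * C := by ring
    rwa [hval] at this
  -- p-equation: (d/dt) pₐ = p0 · B a
  have hpa : ∀ a : Fin n, HasDerivAt (fun s => p s a) (p0 t * B a) t := by
    intro a
    have hmul := (hBa a).const_mul (-(p0 t))
    have := hp t ht a
    rw [hmul.deriv] at this
    have hval : -(-(p0 t) * B a) = p0 t * B a := by ring
    rwa [hval] at this
  refine ⟨?_, ?_, ?_⟩
  · intro a
    rw [(hGa a).deriv]
    exact hq' a
  · intro a
    rw [(hBa a).deriv, hCa.deriv]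
    have hdiv := (hpa a).neg.div hp0' hne
    have hval : (-(p0 t * B a) * p0 t - -(p t a) * (p0 t * C)) / p0 t ^ 2
        = -(B a) - (-(p t a) / p0 t) * C := by
      field_simp
    simp only [Pi.neg_apply] at hdiv
    rwa [hval] at hdiv
  · -- q0-equation
    have hc3 : HasDerivAt (fun s : ℝ => fun j => -(p t j) / s)
        (fun j => p t j / (p0 t) ^ 2) (p0 t) := by
      rw [hasDerivAt_pi]
      intro j
      simpa [div_eq_mul_inv, neg_mul_neg] using ((hasDerivAt_inv hne).const_mul (-(p t j)))
    have hcurve : HasDerivAt (fun s : ℝ => ((q0 t, q t, fun j => -(p t j) / s, t) : E))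
        (((0:ℝ), (0:Fin n → ℝ), (fun j => p t j / (p0 t) ^ 2), (0:ℝ))) (p0 t) :=
      (hasDerivAt_const _ _).prodMk ((hasDerivAt_const _ _).prodMk
        (hc3.prodMk (hasDerivAt_const _ _)))
    have hFd' : HasFDerivAt F L
        ((fun s : ℝ => ((q0 t, q t, fun j => -(p t j) / s, t) : E)) (p0 t)) := hFd
    have hcomp := hFd'.comp_hasDerivAt _ hcurve
    have hmul := (hasDerivAt_id (p0 t)).neg.mul hcomp
    rw [hsumL] at hmul
    have hDeriv : deriv (fun s : ℝ => -s * K (q0 t) (q t) (fun i => -(p t i) / s) t) (p0 t)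
        = -1 * K (q0 t) (q t) (fun j => -(p t j) / p0 t) t
          + -(p0 t) * ∑ a : Fin n, p t a / (p0 t) ^ 2 * A a := hmul.deriv
    have hq0' := hq0 t ht
    rw [hDeriv] at hq0'
    have hrw : ∀ a : Fin n, deriv (fun s : ℝ => K (q0 t) (q t)
        (Function.update (fun j => -(p t j) / p0 t) a s) t) (-(p t a) / p0 t) = A a :=
      fun a => (hGa a).deriv
    simp only [hrw]
    have hval : -1 * K (q0 t) (q t) (fun j => -(p t j) / p0 t) t
          + -(p0 t) * ∑ a : Fin n, p t a / (p0 t) ^ 2 * A a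
        = -(K (q0 t) (q t) (fun j => -(p t j) / p0 t) t)
          + ∑ a : Fin n, (-(p t a) / p0 t) * A a := by
      rw [Finset.mul_sum]
      congr 1
      · ring
      · refine Finset.sum_congr rfl fun a _ => ?_
        field_simp
    rwa [hval] at hq0'
end

section
/- Let d ≥ 1, σ ≥ 2, and let f : ℝ^d → ℝ be continuously differentiable with gradient ∇f. Set Γ₀(t; σ) = σ² t^{σ−2} and Γ₁(t; σ) = (2σ+1)/t for t > 0. Suppose q⁰, p₀ : (0, ∞) → ℝ and q, p : (0, ∞) → ℝ^d are differentiable, p₀(t) ≠ 0 for all t > 0, and they satisfy the canonical equations of the Hamiltonian H^{ZZ}(q⁰, q, p₀, p, t) = −p₀ [½ Σₐ pₐ²/p₀² + Γ₀(t; σ) f(q) + Γ₁(t; σ) q⁰], namely: (d/dt)q⁰ = ½ Σ_b p_b²/p₀² − Γ₀ f(q) − Γ₁ q⁰, (d/dt)p₀ = Γ₁ p₀, (d/dt)qᵃ = −pₐ/p₀, and (d/dt)pₐ = p₀ Γ₀ (∂f/∂qᵃ)(q) for a = 1, …, d. Then q is twice differentiable and satisfies Zhang's equation: q̈(t) + Γ₁(t;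 σ) q̇(t) + Γ₀(t; σ) ∇f(q(t)) = 0 for all t > 0. -/
/-- **Theorem 3 made explicit.** A solution of the canonical equations of the
Hamiltonian `H^{ZZ}(q⁰,q,p₀,p,t) = -p₀ [½ Σₐ pₐ²/p₀² + Γ₀(t;σ) f(q) + Γ₁(t;σ) q⁰]`,
with `Γ₀(t;σ) = σ² t^(σ-2)`, `Γ₁(t;σ) = (2σ+1)/t` and `p₀ ≠ 0`, yields a twice
differentiable solution `q` of Zhang's equation on `(0, ∞)`. -/
theorem hamiltonian_HZZ_gives_zhang_equation
    (d : ℕ) (hd : 1 ≤ d) (σ : ℝ) (hσ : 2 ≤ σ)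
    (f : (Fin d → ℝ) → ℝ) (hf : ContDiff ℝ 1 f)
    (q0 p0 : ℝ → ℝ) (q p : ℝ → Fin d → ℝ)
    (hp0ne : ∀ t ∈ Set.Ioi (0 : ℝ), p0 t ≠ 0)
    -- (d/dt)q⁰ = ½ Σ_b p_b²/p₀² − Γ₀ f(q) − Γ₁ q⁰
    (hq0 : ∀ t ∈ Set.Ioi (0 : ℝ), HasDerivAt q0
      ((1 / 2) * ∑ b : Fin d, (p t b) ^ 2 / (p0 t) ^ 2
        - σ ^ 2 * t ^ (σ - 2) * f (q t)
        - ((2 * σ + 1) / t) * q0 t) t)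
    -- (d/dt)p₀ = Γ₁ p₀
    (hp0 : ∀ t ∈ Set.Ioi (0 : ℝ), HasDerivAt p0 (((2 * σ + 1) / t) * p0 t) t)
    -- (d/dt)qᵃ = −pₐ/p₀
    (hq : ∀ t ∈ Set.Ioi (0 : ℝ), ∀ a : Fin d,
      HasDerivAt (fun s => q s a) (-(p t a) / p0 t) t)
    -- (d/dt)pₐ = p₀ Γ₀ (∂f/∂qᵃ)(q)
    (hp : ∀ t ∈ Set.Ioi (0 : ℝ), ∀ a : Fin d,
      HasDerivAt (fun s => p s a)
        (p0 t * (σ ^ 2 * t ^ (σ - 2)) *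
          deriv (fun s : ℝ => f (Function.update (q t) a s)) (q t a)) t) :
    -- Zhang's equation: q̈ᵃ + Γ₁ q̇ᵃ + Γ₀ (∂f/∂qᵃ)(q) = 0
    ∀ t ∈ Set.Ioi (0 : ℝ), ∀ a : Fin d,
      HasDerivAt (fun s => deriv (fun u => q u a) s)
        (-(((2 * σ + 1) / t) * deriv (fun u => q u a) t)
          - σ ^ 2 * t ^ (σ - 2) *
            deriv (fun s : ℝ => f (Function.update (q t) a s)) (q t a)) t := by
  intro t ht a
  have ht0 : (0:ℝ) < t := ht
  have hp0t := hp0ne t ht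
  have hqd : deriv (fun u => q u a) t = -(p t a) / p0 t := (hq t ht a).deriv
  set D := σ ^ 2 * t ^ (σ - 2) *
      deriv (fun s : ℝ => f (Function.update (q t) a s)) (q t a) with hD
  have hg : HasDerivAt (fun s => -(p s a) / p0 s)
      ((-(p0 t * (σ ^ 2 * t ^ (σ - 2)) *
          deriv (fun s : ℝ => f (Function.update (q t) a s)) (q t a)) * p0 t
        - (-(p t a)) * (((2 * σ + 1) / t) * p0 t)) / (p0 t) ^ 2) t :=
    ((hp t ht a).neg).div (hp0 t ht) hp0t
  have heq : (fun s => deriv (fun u => q u a) s) =ᶠ[nhds t]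
      (fun s => -(p s a) / p0 s) := by
    filter_upwards [Ioi_mem_nhds ht0] with s hs
    exact (hq s hs a).deriv
  have hmain := hg.congr_of_eventuallyEq heq
  convert hmain using 1
  · rfl
  · rfl
  rw [hqd, hD]
  field_simp
  ring
end

section
/- Let d ≥ 1, let Ȟ : ℝ^d × ℝ^d × ℝ → ℝ, (q, p, t) ↦ Ȟ(q, p, t), be continuously differentiable, let I ⊆ ℝ be an open interval, let Γ : I → ℝ be continuous, and let p₀ˢ : I → ℝ be differentiable with (d/dt)p₀ˢ(t) = Γ(t) p₀ˢ(t) on I. Define H₁(q⁰, q, p₀, p, t) = −p₀ [Ȟ(q, p, t) + Γ(t) q⁰]. Suppose q⁰, p₀ : I → ℝ and q, p : I → ℝ^d are differentiable and satisfy the canonical equations of H₁: (d/dt)q⁰ = −Ȟ(q, p, t) − Γ(t) q⁰, (d/dt)p₀ = Γ(t) p₀, (d/dt)qᵃ = −p₀ · (∂Ȟ/∂pₐ)(q, p, t), (d/dt)pₐ = p₀ · (∂Ȟ/∂qᵃ)(q, p, t) for a = 1, …, d. If moreover p₀(t₀) = p₀ˢ(t₀) for some t₀ ∈ I, then p₀(t)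 = p₀ˢ(t) for all t ∈ I, and (q, p) satisfies the canonical equations of the reduced Hamiltonian H₂(q, p, t) = −p₀ˢ(t) Ȟ(q, p, t), namely (d/dt)qᵃ = −p₀ˢ(t) · (∂Ȟ/∂pₐ)(q, p, t) and (d/dt)pₐ = p₀ˢ(t) · (∂Ȟ/∂qᵃ)(q, p, t). -/
open Set in
lemma linear_ode_unique_aux {α β : ℝ} {Γ f g : ℝ → ℝ}
    (hΓ : ContinuousOn Γ (Ioo α β))
    (hf : ∀ t ∈ Ioo α β, HasDerivAt f (Γ t * f t) t)
    (hg : ∀ t ∈ Ioo α β, HasDerivAt g (Γ t * g t) t)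
    {t0 : ℝ} (ht0 : t0 ∈ Ioo α β) (heq : f t0 = g t0) :
    ∀ t ∈ Ioo α β, f t = g t := by
  intro t ht
  set c := min t0 t with hc
  set e := max t0 t with he
  have hcI : c ∈ Ioo α β := by
    rcases min_cases t0 t with ⟨h1, _⟩ | ⟨h1, _⟩ <;> simp [hc, h1, ht0, ht]
  have heI : e ∈ Ioo α β := by
    rcases max_cases t0 t with ⟨h1, _⟩ | ⟨h1, _⟩ <;> simp [he, h1, ht0, ht]
  set a' := (α + c) / 2 with ha'
  set b' := (e + β) / 2 with hb'
  have ha'1 : α < a' := by rw [ha']; linarith [hcI.1]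
  have ha'2 : a' < c := by rw [ha']; linarith [hcI.1]
  have hb'1 : e < b' := by rw [hb']; linarith [heI.2]
  have hb'2 : b' < β := by rw [hb']; linarith [heI.2]
  have hsub : Icc a' b' ⊆ Ioo α β := fun x hx =>
    ⟨lt_of_lt_of_le ha'1 hx.1, lt_of_le_of_lt hx.2 hb'2⟩
  -- bound Γ on the compact interval
  obtain ⟨K, hK⟩ : ∃ K : ℝ, ∀ x ∈ Icc a' b', |Γ x| ≤ K := by
    obtain ⟨K, hK⟩ := (isCompact_Icc.image_of_continuousOn
      ((hΓ.mono hsub).norm)).bddAbove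
    exact ⟨K, fun x hx => hK ⟨x, hx, rfl⟩⟩
  have hK0 : 0 ≤ K := le_trans (abs_nonneg _) (hK a' ⟨le_rfl, by
    have : c ≤ e := min_le_max
    linarith⟩)
  set v : ℝ → ℝ → ℝ := fun s x => (if s ∈ Icc a' b' then Γ s else 0) * x with hv
  have hlip : ∀ s, LipschitzWith ⟨K, hK0⟩ (v s) := by
    intro s
    apply LipschitzWith.of_dist_le_mul
    intro x y
    simp only [hv, Real.dist_eq, ← mul_sub, abs_mul]
    apply mul_le_mul_of_nonneg_right _ (abs_nonneg _)
    split
    · exact hK s ‹_›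
    · simp only [abs_zero]; exact hK0
  have key : EqOn f g (Ioo a' b') := by
    refine ODE_solution_unique_of_mem_Ioo (K := ⟨K, hK0⟩) (s := fun _ => univ)
      (fun s _ => (hlip s).lipschitzOnWith) (t₀ := t0)
      ⟨lt_of_lt_of_le ha'2 (min_le_left _ _), lt_of_le_of_lt (le_max_left _ _) hb'1⟩
      ?_ ?_ heq
    · intro s hs
      refine ⟨?_, trivial⟩
      have hm : s ∈ Icc a' b' := Ioo_subset_Icc_self hs
      obtain ⟨h1, h2⟩ := hm
      simpa [hv, h1, h2] using hf s (hsub ⟨h1, h2⟩)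
    · intro s hs
      refine ⟨?_, trivial⟩
      have hm : s ∈ Icc a' b' := Ioo_subset_Icc_self hs
      obtain ⟨h1, h2⟩ := hm
      simpa [hv, h1, h2] using hg s (hsub ⟨h1, h2⟩)
  exact key ⟨lt_of_lt_of_le ha'2 (min_le_right _ _), lt_of_le_of_lt (le_max_right _ _) hb'1⟩



/-- **Proposition 4 (reduction of the Hamiltonian).** If `(q⁰, q, p₀, p)` solves
the canonical equations of `H₁(q⁰,q,p₀,p,t) = -p₀ [Ȟ(q,p,t) + Γ(t) q⁰]` on an
open interval `I`, and `p₀` agrees at one point `t₀ ∈ I` with a solution `p₀ˢ`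
of `ṗ₀ = Γ(t) p₀`, then `p₀ = p₀ˢ` on `I` and `(q, p)` solves the canonical
equations of the reduced Hamiltonian `H₂(q,p,t) = -p₀ˢ(t) Ȟ(q,p,t)`. -/
theorem reduced_hamiltonian_system
    (d : ℕ) (hd : 1 ≤ d)
    (Hc : (Fin d → ℝ) → (Fin d → ℝ) → ℝ → ℝ)
    (hHc : ContDiff ℝ 1 (fun x : (Fin d → ℝ) × (Fin d → ℝ) × ℝ =>
      Hc x.1 x.2.1 x.2.2))
    (α β : ℝ) (Γ : ℝ → ℝ) (hΓ : ContinuousOn Γ (Set.Ioo α β))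
    (p0s : ℝ → ℝ)
    (hp0s : ∀ t ∈ Set.Ioo α β, HasDerivAt p0s (Γ t * p0s t) t)
    (q0 p0 : ℝ → ℝ) (q p : ℝ → Fin d → ℝ)
    -- canonical equations of H₁:
    (hq0 : ∀ t ∈ Set.Ioo α β, HasDerivAt q0
      (-(Hc (q t) (p t) t) - Γ t * q0 t) t)
    (hp0 : ∀ t ∈ Set.Ioo α β, HasDerivAt p0 (Γ t * p0 t) t)
    (hq : ∀ t ∈ Set.Ioo α β, ∀ a : Fin d, HasDerivAt (fun s => q s a)
      (-(p0 t) * deriv (fun s : ℝ => Hc (q t) (Function.update (p t) a s) t) (p t a)) t)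
    (hp : ∀ t ∈ Set.Ioo α β, ∀ a : Fin d, HasDerivAt (fun s => p s a)
      (p0 t * deriv (fun s : ℝ => Hc (Function.update (q t) a s) (p t) t) (q t a)) t)
    -- agreement at one point:
    (t0 : ℝ) (ht0 : t0 ∈ Set.Ioo α β) (hagree : p0 t0 = p0s t0) :
    (∀ t ∈ Set.Ioo α β, p0 t = p0s t) ∧
    -- canonical equations of the reduced Hamiltonian H₂ = -p₀ˢ(t) Ȟ:
    (∀ t ∈ Set.Ioo α β, ∀ a : Fin d,
      HasDerivAt (fun s => q s a)
        (-(p0s t) * deriv (fun s : ℝ => Hc (q t) (Function.update (p t) a s) t) (p t a)) t ∧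
      HasDerivAt (fun s => p s a)
        (p0s t * deriv (fun s : ℝ => Hc (Function.update (q t) a s) (p t) t) (q t a)) t) := by
  have hmain : ∀ t ∈ Set.Ioo α β, p0 t = p0s t :=
    linear_ode_unique_aux hΓ hp0 hp0s ht0 hagree
  refine ⟨hmain, fun t ht a => ?_⟩
  rw [← hmain t ht]
  exact ⟨(hq t ht a), (hp t ht a)⟩
end

section
/- Let d ≥ 1, σ ≥ 2, c ≠ 0, and let f : ℝ^d → ℝ be continuously differentiable with gradient ∇f. Set p₀(t; σ) = c · t^{2σ+1}, Γ₀(t; σ) = σ² t^{σ−2}, and Γ₁(t; σ) = (2σ+1)/t for t > 0. Suppose q, p : (0, ∞) → ℝ^d are differentiable and satisfy the canonical equations of the reduced Hamiltonian H^Z(q, p, t) = −(1/(2 p₀(t; σ))) Σₐ pₐ² − p₀(t; σ) Γ₀(t; σ) f(q), namely (d/dt)qᵃ(t) = −pₐ(t)/p₀(t; σ) and (d/dt)pₐ(t) = p₀(t; σ) Γ₀(t; σ) (∂f/∂qᵃ)(q(t)) for all t > 0 and a = 1, …, d. Then q is twice differentiable and satisfies Zhang's equation: q̈(t) + Γ₁(t;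 σ) q̇(t) + Γ₀(t; σ) ∇f(q(t)) = 0 for all t > 0. -/
/-- **Proposition 5 made explicit.** A solution of the canonical equations of the
reduced Hamiltonian `H^Z(q,p,t) = -(1/(2 p₀(t;σ))) Σₐ pₐ² - p₀(t;σ) Γ₀(t;σ) f(q)`,
where `p₀(t;σ) = c t^(2σ+1)` with `c ≠ 0` and `Γ₀(t;σ) = σ² t^(σ-2)`, yields a
twice differentiable solution `q` of Zhang's equation
`q̈ + Γ₁(t;σ) q̇ + Γ₀(t;σ) ∇f(q) = 0` on `(0, ∞)` with `Γ₁(t;σ) = (2σ+1)/t`. -/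
theorem reduced_hamiltonian_HZ_gives_zhang_equation
    (d : ℕ) (hd : 1 ≤ d) (σ c : ℝ) (hσ : 2 ≤ σ) (hc : c ≠ 0)
    (f : (Fin d → ℝ) → ℝ) (hf : ContDiff ℝ 1 f)
    (q p : ℝ → Fin d → ℝ)
    -- (d/dt)qᵃ = −pₐ/p₀(t;σ)
    (hq : ∀ t ∈ Set.Ioi (0 : ℝ), ∀ a : Fin d,
      HasDerivAt (fun s => q s a) (-(p t a) / (c * t ^ (2 * σ + 1))) t)
    -- (d/dt)pₐ = p₀(t;σ) Γ₀(t;σ) (∂f/∂qᵃ)(q)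
    (hp : ∀ t ∈ Set.Ioi (0 : ℝ), ∀ a : Fin d,
      HasDerivAt (fun s => p s a)
        (c * t ^ (2 * σ + 1) * (σ ^ 2 * t ^ (σ - 2)) *
          deriv (fun s : ℝ => f (Function.update (q t) a s)) (q t a)) t) :
    -- Zhang's equation: q̈ᵃ + Γ₁ q̇ᵃ + Γ₀ (∂f/∂qᵃ)(q) = 0
    ∀ t ∈ Set.Ioi (0 : ℝ), ∀ a : Fin d,
      HasDerivAt (fun s => deriv (fun u => q u a) s)
        (-(((2 * σ + 1) / t) * deriv (fun u => q u a) t)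
          - σ ^ 2 * t ^ (σ - 2) *
            deriv (fun s : ℝ => f (Function.update (q t) a s)) (q t a)) t := by
  intro t ht a
  have ht0 : (0:ℝ) < t := ht
  have htne : t ≠ 0 := ht0.ne'
  set D := deriv (fun s : ℝ => f (Function.update (q t) a s)) (q t a) with hD
  have hT : (0:ℝ) < t ^ (2*σ+1) := Real.rpow_pos_of_pos ht0 _
  have hTne : t ^ (2*σ+1) ≠ 0 := hT.ne'
  have hden : HasDerivAt (fun s : ℝ => c * s ^ (2*σ+1))
      (c * ((2*σ+1) * t ^ (2*σ+1-1))) t :=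
    (Real.hasDerivAt_rpow_const (p := 2*σ+1) (Or.inl htne)).const_mul c
  have hnum : HasDerivAt (fun s : ℝ => -(p s a))
      (-(c * t ^ (2 * σ + 1) * (σ ^ 2 * t ^ (σ - 2)) * D)) t := (hp t ht a).neg
  have hg : HasDerivAt (fun s : ℝ => -(p s a) / (c * s ^ (2*σ+1)))
      ((-(c * t ^ (2 * σ + 1) * (σ ^ 2 * t ^ (σ - 2)) * D) * (c * t ^ (2*σ+1))
        - (-(p t a)) * (c * ((2*σ+1) * t ^ (2*σ+1-1)))) / (c * t ^ (2*σ+1))^2) t :=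
    hnum.div hden (mul_ne_zero hc hTne)
  have heq : (fun s => deriv (fun u => q u a) s)
      =ᶠ[nhds t] (fun s : ℝ => -(p s a) / (c * s ^ (2*σ+1))) := by
    filter_upwards [Ioi_mem_nhds ht0] with s hs
    exact (hq s hs a).deriv
  have hderiv_eq : deriv (fun u => q u a) t = -(p t a) / (c * t ^ (2*σ+1)) :=
    (hq t ht a).deriv
  have hfinal := hg.congr_of_eventuallyEq heq
  refine hfinal.congr_deriv ?_
  rw [hderiv_eq]
  have hsub : t ^ (2*σ+1-1) = t ^ (2*σ+1) / t := by
    rw [Real.rpow_sub ht0, Real.rpow_one]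
  rw [hsub]
  field_simp
  ring
end

section
/- Let d ≥ 1, let I ⊆ (0, ∞) be an open interval, let Γ₀, Γ₁ : I → ℝ be continuous, let f : ℝ^d → ℝ be continuously differentiable with gradient ∇f, and let p₀ : I → ℝ be differentiable, nowhere vanishing on I, with (d/dt)p₀(t) = Γ₁(t) p₀(t). Then a twice-differentiable x : I → ℝ^d satisfies the ODE ẍ(t) + Γ₁(t) ẋ(t) + Γ₀(t) ∇f(x(t)) = 0 on I if and only if the pair (q, p) := (x, −p₀ · ẋ) satisfies the Hamiltonian system (d/dt)qᵃ(t) = −pₐ(t)/p₀(t) and (d/dt)pₐ(t) = p₀(t) Γ₀(t) (∂f/∂qᵃ)(q(t)) on I for a = 1, …, d. -/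
/-- **Corollary after Theorem 3.** For continuous `Γ₀, Γ₁` on an open interval
`I ⊆ (0, ∞)` and a nowhere vanishing solution `p₀` of `ṗ₀ = Γ₁(t) p₀`, a twice
differentiable curve `x` satisfies `ẍ + Γ₁(t) ẋ + Γ₀(t) ∇f(x) = 0` on `I` if and
only if `(q, p) := (x, -p₀ ẋ)` satisfies the non-autonomous Hamiltonian system
`q̇ᵃ = -pₐ/p₀`, `ṗₐ = p₀ Γ₀(t) (∂f/∂qᵃ)(q)` on `I`. -/
theorem general_second_order_ode_as_hamiltonian_system
    (d : ℕ) (hd : 1 ≤ d) (α β : ℝ) (hα : 0 ≤ α)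
    (Γ₀ Γ₁ : ℝ → ℝ)
    (hΓ₀ : ContinuousOn Γ₀ (Set.Ioo α β)) (hΓ₁ : ContinuousOn Γ₁ (Set.Ioo α β))
    (f : (Fin d → ℝ) → ℝ) (hf : ContDiff ℝ 1 f)
    (p0 : ℝ → ℝ)
    (hp0ne : ∀ t ∈ Set.Ioo α β, p0 t ≠ 0)
    (hp0 : ∀ t ∈ Set.Ioo α β, HasDerivAt p0 (Γ₁ t * p0 t) t)
    (x : ℝ → Fin d → ℝ)
    -- x is twice differentiable on I:
    (hx1 : ∀ t ∈ Set.Ioo α β, ∀ a : Fin d, DifferentiableAt ℝ (fun s => x s a) t)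
    (hx2 : ∀ t ∈ Set.Ioo α β, ∀ a : Fin d,
      DifferentiableAt ℝ (fun s => deriv (fun u => x u a) s) t) :
    -- the ODE  ẍ + Γ₁ ẋ + Γ₀ ∇f(x) = 0  on I …
    (∀ t ∈ Set.Ioo α β, ∀ a : Fin d,
      HasDerivAt (fun s => deriv (fun u => x u a) s)
        (-(Γ₁ t * deriv (fun u => x u a) t)
          - Γ₀ t * deriv (fun s : ℝ => f (Function.update (x t) a s)) (x t a)) t)
    ↔
    -- … iff  (q, p) = (x, -p₀ ẋ)  solves the Hamiltonian system
    (∀ t ∈ Set.Ioo α β, ∀ a : Fin d,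
      HasDerivAt (fun s => x s a)
        (-(-(p0 t) * deriv (fun u => x u a) t) / p0 t) t ∧
      HasDerivAt (fun s => -(p0 s) * deriv (fun u => x u a) s)
        (p0 t * Γ₀ t *
          deriv (fun s : ℝ => f (Function.update (x t) a s)) (x t a)) t) := by
  constructor
  · intro h t ht a
    have hne := hp0ne t ht
    have hx1' := (hx1 t ht a).hasDerivAt
    have h2 := h t ht a
    refine ⟨?_, ?_⟩
    · have heq : -(-(p0 t) * deriv (fun u => x u a) t) / p0 t
          = deriv (fun u => x u a) t := by field_simp
      rw [heq]; exact hx1'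
    · have : HasDerivAt (fun s => -(p0 s) * deriv (fun u => x u a) s) _ t :=
        (hp0 t ht).neg.mul h2
      convert this using 1
      simp only [Pi.neg_apply]; ring
  · intro h t ht a
    have hne := hp0ne t ht
    obtain ⟨_, h2⟩ := h t ht a
    have hprod := (hp0 t ht).neg.mul (hx2 t ht a).hasDerivAt
    have huniq := h2.unique hprod
    have : deriv (fun s => deriv (fun u => x u a) s) t
        = -(Γ₁ t * deriv (fun u => x u a) t)
          - Γ₀ t * deriv (fun s : ℝ => f (Function.update (x t) a s)) (x t a) := by
      have h' : -(p0 t) * deriv (fun s => deriv (fun u => x u a) s) t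
          = p0 t * Γ₀ t * deriv (fun s : ℝ => f (Function.update (x t) a s)) (x t a)
            + Γ₁ t * p0 t * deriv (fun u => x u a) t := by
        rw [huniq]; simp only [Pi.neg_apply]; ring
      apply mul_left_cancel₀ (neg_ne_zero.mpr hne)
      rw [h']; ring
    rw [← this]
    exact (hx2 t ht a).hasDerivAt
end

section
/- Let d ≥ 1, σ ≥ 2, c ≠ 0, and let J ⊆ (0, ∞) be an interval. Suppose q, p : J → ℝ^d are differentiable and satisfy the Hamiltonian system of H_K^Z, namely (d/dt)qᵃ(s) = −pₐ(s)/(c · s^{2σ+1}) and (d/dt)pₐ(s) = 0 for all s ∈ J and a = 1, …, d. Then for every t ∈ J and τ > 0 with t + τ ∈ J: pₐ(t + τ) = pₐ(t) and qᵃ(t + τ) = qᵃ(t) + (pₐ(t)/(2σc)) · [(t + τ)^{−2σ} − t^{−2σ}] for a = 1, …, d. -/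
/-- **Lemma 8, `H_K^Z` half.** Along any solution of the Hamiltonian system of
`H_K^Z(p,t) = -(1/(2 c t^(2σ+1))) Σₐ pₐ²`, i.e. `q̇ᵃ = -pₐ/(c t^(2σ+1))`, `ṗₐ = 0`,
on an interval `J ⊆ (0, ∞)`, the flow from `t` to `t + τ` is given in closed form:
`pₐ(t+τ) = pₐ(t)` and
`qᵃ(t+τ) = qᵃ(t) + (pₐ(t)/(2σc)) [(t+τ)^(-2σ) - t^(-2σ)]`. -/
theorem flow_of_HK
    (d : ℕ) (hd : 1 ≤ d) (σ c : ℝ) (hσ : 2 ≤ σ) (hc : c ≠ 0)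
    (J : Set ℝ) (hJ : J ⊆ Set.Ioi 0) (hJconv : Convex ℝ J)
    (q p : ℝ → Fin d → ℝ)
    (hq : ∀ s ∈ J, ∀ a : Fin d,
      HasDerivAt (fun u => q u a) (-(p s a) / (c * s ^ (2 * σ + 1))) s)
    (hp : ∀ s ∈ J, ∀ a : Fin d, HasDerivAt (fun u => p u a) 0 s) :
    ∀ t ∈ J, ∀ τ > (0 : ℝ), t + τ ∈ J → ∀ a : Fin d,
      p (t + τ) a = p t a ∧
      q (t + τ) a = q t a
        + p t a / (2 * σ * c) * ((t + τ) ^ (-(2 * σ)) - t ^ (-(2 * σ))) := by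
  intro t ht τ hτ htτ a
  have hσ0 : σ ≠ 0 := by linarith
  -- p is constant on J
  have hpconst : ∀ x ∈ J, p x a = p t a := by
    intro x hx
    have hb := hJconv.norm_image_sub_le_of_norm_hasDerivWithin_le
      (f := fun u => p u a) (f' := fun _ => (0 : ℝ)) (C := 0)
      (fun y hy => ((hp y hy a).hasDerivWithinAt)) (fun y hy => by simp) ht hx
    have : ‖p x a - p t a‖ ≤ 0 := by simpa using hb
    have := norm_le_zero_iff.mp this
    linarith [sub_eq_zero.mp this, (sub_eq_zero.mp this).symm]
  refine ⟨hpconst _ htτ, ?_⟩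
  -- the auxiliary function g has derivative 0 on J
  set g : ℝ → ℝ := fun u => q u a - p t a / (2 * σ * c) * u ^ (-(2 * σ)) with hg
  have hgd : ∀ x ∈ J, HasDerivWithinAt g 0 J x := by
    intro x hx
    have hx0 : (0 : ℝ) < x := hJ hx
    have h1 : HasDerivAt (fun u : ℝ => u ^ (-(2 * σ)))
        ((-(2 * σ)) * x ^ (-(2 * σ) - 1)) x :=
      Real.hasDerivAt_rpow_const (Or.inl hx0.ne')
    have h2 : HasDerivAt g
        (-(p x a) / (c * x ^ (2 * σ + 1))
          - p t a / (2 * σ * c) * ((-(2 * σ)) * x ^ (-(2 * σ) - 1))) x :=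
      (hq x hx a).sub ((h1.const_mul _))
    have hrw : x ^ (-(2 * σ) - 1) = (x ^ (2 * σ + 1))⁻¹ := by
      rw [show (-(2 * σ) - 1 : ℝ) = -(2 * σ + 1) by ring,
        Real.rpow_neg hx0.le]
    have hxp : x ^ (2 * σ + 1) ≠ 0 := (Real.rpow_pos_of_pos hx0 _).ne'
    have hz : -(p x a) / (c * x ^ (2 * σ + 1))
          - p t a / (2 * σ * c) * ((-(2 * σ)) * x ^ (-(2 * σ) - 1)) = 0 := by
      rw [hpconst x hx, hrw]
      field_simp
      ring
    rw [hz] at h2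
    exact h2.hasDerivWithinAt
  have hb := hJconv.norm_image_sub_le_of_norm_hasDerivWithin_le
    (f := g) (f' := fun _ => (0 : ℝ)) (C := 0)
    hgd (fun y hy => by simp) ht htτ
  have : ‖g (t + τ) - g t‖ ≤ 0 := by simpa using hb
  have hge : g (t + τ) = g t := sub_eq_zero.mp (norm_le_zero_iff.mp this)
  have := hge
  simp only [hg] at this
  linarith [this]
end

section
/- Let d ≥ 1, σ ≥ 2, c ≠ 0, let f : ℝ^d → ℝ be continuously differentiable with gradient ∇f, and let J ⊆ (0, ∞) be an interval. Suppose q, p : J → ℝ^d are differentiable and satisfy the Hamiltonian system of H_V^Z, namely (d/dt)qᵃ(s) = 0 and (d/dt)pₐ(s) = σ² c · s^{3σ−1} · (∂f/∂qᵃ)(q(s)) for all s ∈ J and a = 1, …, d. Then for every t ∈ J and τ > 0 with t + τ ∈ J: qᵃ(t + τ) = qᵃ(t) and pₐ(t + τ) = pₐ(t) + (σc/3) · [(t + τ)^{3σ} − t^{3σ}] · (∂f/∂qᵃ)(q(t)) for a = 1, …, d. -/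
/-- **Lemma 8, `H_V^Z` half.** Along any solution of the Hamiltonian system of
`H_V^Z(q,t) = -σ² c t^(3σ-1) f(q)`, i.e. `q̇ᵃ = 0`,
`ṗₐ = σ² c t^(3σ-1) (∂f/∂qᵃ)(q)`, on an interval `J ⊆ (0, ∞)`, the flow from
`t` to `t + τ` is given in closed form: `qᵃ(t+τ) = qᵃ(t)` and
`pₐ(t+τ) = pₐ(t) + (σc/3) [(t+τ)^(3σ) - t^(3σ)] (∂f/∂qᵃ)(q(t))`. -/
theorem flow_of_HV
    (d : ℕ) (hd : 1 ≤ d) (σ c : ℝ) (hσ : 2 ≤ σ) (hc : c ≠ 0)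
    (f : (Fin d → ℝ) → ℝ) (hf : ContDiff ℝ 1 f)
    (J : Set ℝ) (hJ : J ⊆ Set.Ioi 0) (hJconv : Convex ℝ J)
    (q p : ℝ → Fin d → ℝ)
    (hq : ∀ s ∈ J, ∀ a : Fin d, HasDerivAt (fun u => q u a) 0 s)
    (hp : ∀ s ∈ J, ∀ a : Fin d,
      HasDerivAt (fun u => p u a)
        (σ ^ 2 * c * s ^ (3 * σ - 1) *
          deriv (fun r : ℝ => f (Function.update (q s) a r)) (q s a)) s) :
    ∀ t ∈ J, ∀ τ > (0 : ℝ), t + τ ∈ J → ∀ a : Fin d,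
      q (t + τ) a = q t a ∧
      p (t + τ) a = p t a
        + σ * c / 3 * ((t + τ) ^ (3 * σ) - t ^ (3 * σ)) *
          deriv (fun r : ℝ => f (Function.update (q t) a r)) (q t a) := by
  intro t ht τ hτ htτ a
  -- q is constant on J (coordinatewise)
  have hqconst : ∀ s ∈ J, q s = q t := by
    intro s hs
    funext b
    have h := Convex.norm_image_sub_le_of_norm_hasDerivWithin_le
      (f := fun u => q u b) (f' := fun _ => (0 : ℝ)) (C := 0)
      (fun x hx => (hq x hx b).hasDerivWithinAt) (fun x _ => by simp) hJconv ht hs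
    have : ‖q s b - q t b‖ ≤ 0 := by simpa using h
    have := le_antisymm this (norm_nonneg _)
    simpa [sub_eq_zero] using norm_eq_zero.mp this
  set D : ℝ := deriv (fun r : ℝ => f (Function.update (q t) a r)) (q t a) with hD
  set g : ℝ → ℝ := fun u => p u a - σ * c / 3 * u ^ (3 * σ) * D with hg
  have hgderiv : ∀ s ∈ J, HasDerivAt g 0 s := by
    intro s hs
    have hs0 : s ≠ 0 := ne_of_gt (hJ hs)
    have h1 : HasDerivAt (fun u : ℝ => u ^ (3 * σ)) (3 * σ * s ^ (3 * σ - 1)) s :=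
      Real.hasDerivAt_rpow_const (Or.inl hs0)
    have h2 : HasDerivAt (fun u : ℝ => σ * c / 3 * u ^ (3 * σ) * D)
        (σ * c / 3 * (3 * σ * s ^ (3 * σ - 1)) * D) s :=
      ((h1.const_mul (σ * c / 3)).mul_const D)
    have h3 := hp s hs a
    rw [hqconst s hs] at h3
    have h4 := h3.sub h2
    have heq : σ ^ 2 * c * s ^ (3 * σ - 1) * D
        - σ * c / 3 * (3 * σ * s ^ (3 * σ - 1)) * D = 0 := by ring
    rw [heq] at h4
    exact h4
  have h := Convex.norm_image_sub_le_of_norm_hasDerivWithin_le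
    (f := g) (f' := fun _ => (0 : ℝ)) (C := 0)
    (fun x hx => (hgderiv x hx).hasDerivWithinAt) (fun x _ => by simp) hJconv ht htτ
  have hg0 : g (t + τ) = g t := by
    have : ‖g (t + τ) - g t‖ ≤ 0 := by simpa using h
    have := le_antisymm this (norm_nonneg _)
    simpa [sub_eq_zero] using norm_eq_zero.mp this
  refine ⟨congrFun (hqconst (t + τ) htτ) a, ?_⟩
  have : p (t + τ) a - σ * c / 3 * (t + τ) ^ (3 * σ) * D
      = p t a - σ * c / 3 * t ^ (3 * σ) * D := hg0
  linarith [this]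
end

section
/- Let d ≥ 1, σ ≥ 2, c ≠ 0, and let f : ℝ^d → ℝ be twice continuously differentiable with gradient ∇f. Fix t > 0 and suppose q, p : I → ℝ^d is a twice continuously differentiable solution, on an open interval I containing t, of the reduced Hamiltonian system (d/ds)qᵃ(s) = −pₐ(s)/(c s^{2σ+1}), (d/ds)pₐ(s) = σ² c s^{3σ−1} (∂f/∂qᵃ)(q(s)). For τ > 0 define the one-step first-order splitting update (q′(τ), p′(τ)) by: q′ = q(t) + (1/(2σc)) [(t+τ)^{−2σ} − t^{−2σ}] · p(t), and p′ = p(t) + (σc/3) [(t+τ)^{3σ} − t^{3σ}] · ∇f(q′). Then the local error satisfies ‖(q(t+τ), p(t+τ)) − (q′(τ), p′(τ))‖ = O(τ²) as τ → 0⁺. -/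
open Asymptotics Filter Set


/-- Mean-value step: if `E 0 = 0`, `E` has derivative `E'` on an interval around 0,
and `E' = O(s)` at 0, then `E = O(τ²)` as `τ → 0⁺`. -/
lemma bigO_sq_of_deriv {E E' : ℝ → ℝ} {a b : ℝ} (ha : a < 0) (hb : 0 < b)
    (hE : ∀ s ∈ Set.Ioo a b, HasDerivAt E (E' s) s)
    (hE0 : E 0 = 0)
    (hO : E' =O[nhds 0] fun s => s) :
    E =O[nhdsWithin 0 (Set.Ioi 0)] fun τ => τ ^ 2 := by
  obtain ⟨C, hC⟩ := hO.bound
  rw [Metric.eventually_nhds_iff] at hC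
  obtain ⟨ε, hε, hball⟩ := hC
  rw [Asymptotics.isBigO_iff]
  refine ⟨max C 0, ?_⟩
  have hmem : Set.Ioo (0:ℝ) (min ε b) ∈ nhdsWithin (0:ℝ) (Set.Ioi 0) :=
    Ioo_mem_nhdsGT_of_mem ⟨le_refl 0, lt_min hε hb⟩
  filter_upwards [hmem] with τ hτ
  obtain ⟨hτ0, hτm⟩ := hτ
  have hτε : τ < ε := lt_of_lt_of_le hτm (min_le_left _ _)
  have hτb : τ < b := lt_of_lt_of_le hτm (min_le_right _ _)
  have hsub : Set.Icc (0:ℝ) τ ⊆ Set.Ioo a b := fun s hs =>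
    ⟨lt_of_lt_of_le ha hs.1, lt_of_le_of_lt hs.2 hτb⟩
  have hderiv : ∀ s ∈ Set.Icc (0:ℝ) τ, HasDerivWithinAt E (E' s) (Set.Icc 0 τ) s :=
    fun s hs => (hE s (hsub hs)).hasDerivWithinAt
  have hbound : ∀ s ∈ Set.Icc (0:ℝ) τ, ‖E' s‖ ≤ max C 0 * τ := by
    intro s hs
    have hd : dist s 0 < ε := by
      rw [Real.dist_eq, sub_zero]
      calc |s| = s := abs_of_nonneg hs.1
        _ ≤ τ := hs.2
        _ < ε := hτε
    calc ‖E' s‖ ≤ C * ‖s‖ := hball hd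
      _ ≤ max C 0 * ‖s‖ := by
          apply mul_le_mul_of_nonneg_right (le_max_left _ _) (norm_nonneg _)
      _ ≤ max C 0 * τ := by
          apply mul_le_mul_of_nonneg_left _ (le_max_right _ _)
          rw [Real.norm_eq_abs, abs_of_nonneg hs.1]; exact hs.2
  have key := Convex.norm_image_sub_le_of_norm_hasDerivWithin_le hderiv hbound
    (convex_Icc 0 τ) (Set.left_mem_Icc.2 hτ0.le) (Set.right_mem_Icc.2 hτ0.le)
  rw [hE0, sub_zero, sub_zero] at key
  calc ‖E τ‖ ≤ max C 0 * τ * ‖τ‖ := key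
    _ = max C 0 * ‖τ ^ 2‖ := by
        rw [Real.norm_eq_abs, Real.norm_eq_abs, abs_of_nonneg hτ0.le,
          abs_of_nonneg (sq_nonneg τ)]
        ring

/-- Directional derivative along coordinate `a` equals the `fderiv` applied to `Pi.single a 1`. -/
lemma grad_eq {d : ℕ} {f : (Fin d → ℝ) → ℝ} (hf : Differentiable ℝ f)
    (x : Fin d → ℝ) (a : Fin d) :
    deriv (fun s : ℝ => f (Function.update x a s)) (x a)
      = fderiv ℝ f x (Pi.single a 1 : Fin d → ℝ) := by
  have hupd : HasDerivAt (fun s : ℝ => Function.update x a s) ((Pi.single a 1 : Fin d → ℝ)) (x a) := by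
    have h1 : (fun s : ℝ => Function.update x a s)
        = fun s : ℝ => x + (s - x a) • (Pi.single a 1 : Fin d → ℝ) := by
      funext s; funext b
      by_cases hb : b = a
      · subst hb; simp
      · simp [Function.update_of_ne hb, Pi.single_eq_of_ne hb]
    rw [h1]
    simpa using (((hasDerivAt_id (x a)).sub_const (x a)).smul_const (Pi.single a 1 : Fin d → ℝ)).const_add x
  have hfd : HasFDerivAt f (fderiv ℝ f x) ((fun s : ℝ => Function.update x a s) (x a)) := by
    simpa [Function.update_eq_self] using (hf x).hasFDerivAt
  have := hfd.comp_hasDerivAt (x a) hupd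
  exact this.deriv



/-- Position update of the first-order splitting integrator (exact flow of `H_K^Z`
over a full step): `q′ = q(t) + (1/(2σc)) [(t+τ)^(-2σ) - t^(-2σ)] p(t)`. -/
noncomputable def si1Q (d : ℕ) (σ c t : ℝ) (q p : ℝ → Fin d → ℝ) (τ : ℝ) :
    Fin d → ℝ :=
  fun a => q t a
    + 1 / (2 * σ * c) * ((t + τ) ^ (-(2 * σ)) - t ^ (-(2 * σ))) * p t a

/-- Momentum update of the first-order splitting integrator (exact flow of `H_V^Z`
over a full step, evaluated at the updated position `q′`):
`p′ = p(t) + (σc/3) [(t+τ)^(3σ) - t^(3σ)] ∇f(q′)`. -/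
noncomputable def si1P (d : ℕ) (σ c t : ℝ) (f : (Fin d → ℝ) → ℝ)
    (q p : ℝ → Fin d → ℝ) (τ : ℝ) : Fin d → ℝ :=
  fun a => p t a
    + σ * c / 3 * ((t + τ) ^ (3 * σ) - t ^ (3 * σ)) *
      deriv (fun s : ℝ => f (Function.update (si1Q d σ c t q p τ) a s))
        (si1Q d σ c t q p τ a)

/-- **First-order splitting integrator: local error `O(τ²)`.** Along a `C²`
solution of the reduced Hamiltonian system `q̇ᵃ = -pₐ/(c s^(2σ+1))`,
`ṗₐ = σ² c s^(3σ-1) (∂f/∂qᵃ)(q)`, the one-step update `(q′, p′)` of the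
first-order splitting scheme satisfies
`‖(q(t+τ), p(t+τ)) - (q′(τ), p′(τ))‖ = O(τ²)` as `τ → 0⁺`. -/
theorem si1_local_error_order_two
    (d : ℕ) (hd : 1 ≤ d) (σ c : ℝ) (hσ : 2 ≤ σ) (hc : c ≠ 0)
    (f : (Fin d → ℝ) → ℝ) (hf : ContDiff ℝ 2 f)
    (α β t : ℝ) (ht : t ∈ Set.Ioo α β) (hI : Set.Ioo α β ⊆ Set.Ioi 0)
    (q p : ℝ → Fin d → ℝ)
    (hq2 : ContDiffOn ℝ 2 q (Set.Ioo α β))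
    (hp2 : ContDiffOn ℝ 2 p (Set.Ioo α β))
    (hq : ∀ s ∈ Set.Ioo α β, ∀ a : Fin d,
      HasDerivAt (fun u => q u a) (-(p s a) / (c * s ^ (2 * σ + 1))) s)
    (hp : ∀ s ∈ Set.Ioo α β, ∀ a : Fin d,
      HasDerivAt (fun u => p u a)
        (σ ^ 2 * c * s ^ (3 * σ - 1) *
          deriv (fun r : ℝ => f (Function.update (q s) a r)) (q s a)) s) :
    (fun τ : ℝ =>
        ((q (t + τ) - si1Q d σ c t q p τ, p (t + τ) - si1P d σ c t f q p τ) :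
          (Fin d → ℝ) × (Fin d → ℝ)))
      =O[nhdsWithin 0 (Set.Ioi 0)] fun τ : ℝ => τ ^ 2 := by
  obtain ⟨htα, htβ⟩ := ht
  have htmem : t ∈ Set.Ioo α β := ⟨htα, htβ⟩
  have ht0 : (0:ℝ) < t := hI htmem
  have hσ0 : σ ≠ 0 := by intro h; rw [h] at hσ; norm_num at hσ
  have hfd : Differentiable ℝ f := hf.differentiable (by norm_num)
  have hg : ContDiff ℝ 1 (fderiv ℝ f) := hf.fderiv_right (le_refl 2)
  have hgd : Differentiable ℝ (fderiv ℝ f) := hg.differentiable one_ne_zero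
  have ha0 : α - t < 0 := by linarith
  have hb0 : 0 < β - t := by linarith
  have hJ : ∀ s ∈ Set.Ioo (α - t) (β - t), t + s ∈ Set.Ioo α β := by
    intro s hs; exact ⟨by linarith [hs.1], by linarith [hs.2]⟩
  have hpos : ∀ s ∈ Set.Ioo (α - t) (β - t), 0 < t + s := fun s hs => hI (hJ s hs)
  have hUsub : Set.Ioo (α - t) (β - t) ⊆ Set.Ioi (-t) := by
    intro s hs; simp only [Set.mem_Ioi]; have := hpos s hs; linarith
  have h0U : (0:ℝ) ∈ Set.Ioi (-t) := by simp only [Set.mem_Ioi]; linarith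
  -- derivative of the base shift
  have hshift : ∀ s : ℝ, HasDerivAt (fun τ : ℝ => t + τ) 1 s :=
    fun s => (hasDerivAt_id s).const_add t
  have hpow : ∀ (y : ℝ), ∀ s ∈ Set.Ioi (-t),
      HasDerivAt (fun τ : ℝ => (t + τ) ^ y) (y * (t + s) ^ (y - 1)) s := by
    intro y s hs
    have hts : t + s ≠ 0 := by have : -t < s := hs; intro h; nlinarith [neg_eq_of_add_eq_zero_left h]
    have h := (Real.hasDerivAt_rpow_const (p := y) (Or.inl hts)).comp s (hshift s)
    rw [mul_one] at h; exact h
  -- smoothness of τ ↦ (t+τ)^y on Ioi (-t)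
  have hpowC : ∀ (y : ℝ), ContDiffOn ℝ 1 (fun τ : ℝ => (t + τ) ^ y) (Set.Ioi (-t)) := by
    intro y s hs
    have hts : t + s ≠ 0 := by
      have : -t < s := hs; intro h; nlinarith [neg_eq_of_add_eq_zero_left h]
    exact ((Real.contDiffAt_rpow_const_of_ne hts).comp s
      ((contDiff_const.add contDiff_id).contDiffAt)).contDiffWithinAt
  -- the updated position and its properties
  have hQ0 : si1Q d σ c t q p 0 = q t := by
    funext a; simp [si1Q]
  have hQcd : ContDiffOn ℝ 1 (si1Q d σ c t q p) (Set.Ioi (-t)) := by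
    rw [contDiffOn_pi]
    intro a
    exact contDiffOn_const.add
      (((contDiffOn_const.mul ((hpowC (-(2*σ))).sub contDiffOn_const))).mul contDiffOn_const)
  -- Φ a τ = ∂ₐf (q'(τ)),  Ψ a τ = ∂ₐf (q(t+τ))
  have hΦcd : ∀ a : Fin d, ContDiffOn ℝ 1
      (fun τ => fderiv ℝ f (si1Q d σ c t q p τ) (Pi.single a 1 : Fin d → ℝ))
      (Set.Ioi (-t)) :=
    fun a => (hg.comp_contDiffOn hQcd).clm_apply contDiffOn_const
  have hΦdiff : ∀ a : Fin d, ∀ s ∈ Set.Ioi (-t),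
      HasDerivAt (fun τ => fderiv ℝ f (si1Q d σ c t q p τ) (Pi.single a 1 : Fin d → ℝ))
        (deriv (fun τ => fderiv ℝ f (si1Q d σ c t q p τ) (Pi.single a 1 : Fin d → ℝ)) s)
        s := by
    intro a s hs
    exact (((hΦcd a).differentiableOn one_ne_zero).differentiableAt
      (isOpen_Ioi.mem_nhds hs)).hasDerivAt
  have hΦdcont : ∀ a : Fin d, ContinuousAt
      (deriv (fun τ => fderiv ℝ f (si1Q d σ c t q p τ) (Pi.single a 1 : Fin d → ℝ))) 0 := by
    intro a
    exact ((hΦcd a).continuousOn_deriv_of_isOpen isOpen_Ioi le_rfl).continuousAt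
      (isOpen_Ioi.mem_nhds h0U)
  -- rewrite si1P via fderiv
  have hsi1P : ∀ τ, ∀ a : Fin d, si1P d σ c t f q p τ a
      = p t a + σ * c / 3 * ((t + τ) ^ (3 * σ) - t ^ (3 * σ)) *
          fderiv ℝ f (si1Q d σ c t q p τ) (Pi.single a 1 : Fin d → ℝ) := by
    intro τ a
    simp only [si1P]
    rw [grad_eq hfd]
  -- q-component
  have hQpart : ∀ a : Fin d,
      (fun τ => q (t + τ) a - si1Q d σ c t q p τ a)
        =O[nhdsWithin 0 (Set.Ioi 0)] fun τ => τ ^ 2 := by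
    intro a
    apply bigO_sq_of_deriv (a := α - t) (b := β - t) ha0 hb0
      (E' := fun s => -(p (t+s) a) / (c * (t+s) ^ (2*σ+1))
         - 1/(2*σ*c) * (-(2*σ) * (t+s) ^ (-(2*σ)-1)) * p t a)
    · intro s hs
      have h1 : HasDerivAt (fun τ => q (t+τ) a)
          (-(p (t+s) a) / (c * (t+s) ^ (2*σ+1)) * 1) s :=
        (hq (t+s) (hJ s hs) a).comp s (hshift s)
      have h2 := hpow (-(2*σ)) s (hUsub hs)
      have h3 := (((h2.sub_const (t ^ (-(2*σ)))).const_mul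
        (1/(2*σ*c))).mul_const (p t a)).const_add (q t a)
      have h4 := h1.sub h3
      have h5 : HasDerivAt (fun τ => q (t+τ) a - si1Q d σ c t q p τ a)
          (-(p (t+s) a) / (c * (t+s) ^ (2*σ+1)) * 1
            - 1/(2*σ*c) * (-(2*σ) * (t+s) ^ (-(2*σ)-1)) * p t a) s := h4
      convert h5 using 1
      ring
    · simp [si1Q]
    · have hmem0 : t + 0 ∈ Set.Ioo α β := by rw [add_zero]; exact htmem
      have hdiff : DifferentiableAt ℝ
          (fun s => -(p (t+s) a) / (c * (t+s) ^ (2*σ+1))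
            - 1/(2*σ*c) * (-(2*σ) * (t+s) ^ (-(2*σ)-1)) * p t a) 0 := by
        have hpdiff : DifferentiableAt ℝ (fun τ => p (t+τ) a) 0 :=
          ((hp (t+0) hmem0 a).comp 0 (hshift 0)).differentiableAt
        have hden : DifferentiableAt ℝ (fun τ => c * (t+τ) ^ (2*σ+1)) 0 :=
          ((hpow (2*σ+1) 0 h0U).differentiableAt).const_mul c
        have hdenne : c * (t+0) ^ (2*σ+1) ≠ 0 := by
          rw [add_zero]
          exact mul_ne_zero hc (Real.rpow_pos_of_pos ht0 _).ne'
        exact (hpdiff.neg.div hden hdenne).sub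
          (((((hpow (-(2*σ)-1) 0 h0U).differentiableAt).const_mul
            (-(2*σ))).const_mul (1/(2*σ*c))).mul_const (p t a))
      have h0 : -(p (t+0) a) / (c * (t+0) ^ (2*σ+1))
          - 1/(2*σ*c) * (-(2*σ) * (t+0) ^ (-(2*σ)-1)) * p t a = 0 := by
        rw [add_zero, show -(2*σ)-1 = -(2*σ+1) by ring, Real.rpow_neg ht0.le]
        have hT : t ^ (2*σ+1) ≠ 0 := (Real.rpow_pos_of_pos ht0 _).ne'
        field_simp
        ring
      have hbig := hdiff.hasFDerivAt.isBigO_sub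
      exact hbig.congr (fun x => by rw [h0, sub_zero]) (fun x => sub_zero x)
  -- p-component
  have hPpart : ∀ a : Fin d,
      (fun τ => p (t + τ) a - si1P d σ c t f q p τ a)
        =O[nhdsWithin 0 (Set.Ioi 0)] fun τ => τ ^ 2 := by
    intro a
    have hfun : (fun τ => p (t + τ) a - si1P d σ c t f q p τ a)
        = fun τ => p (t + τ) a
            - (p t a + σ * c / 3 * ((t + τ) ^ (3 * σ) - t ^ (3 * σ)) *
                fderiv ℝ f (si1Q d σ c t q p τ) (Pi.single a 1 : Fin d → ℝ)) := by
      funext τ; rw [hsi1P]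
    rw [hfun]
    apply bigO_sq_of_deriv (a := α - t) (b := β - t) ha0 hb0
      (E' := fun s =>
        (σ^2*c*(t+s)^(3*σ-1) * fderiv ℝ f (q (t+s)) (Pi.single a 1 : Fin d → ℝ)
          - σ*c/3 * (3*σ*(t+s)^(3*σ-1)) *
              fderiv ℝ f (si1Q d σ c t q p s) (Pi.single a 1 : Fin d → ℝ))
        + (-(σ*c/3 * ((t+s)^(3*σ) - t^(3*σ)) *
            deriv (fun τ => fderiv ℝ f (si1Q d σ c t q p τ)
              (Pi.single a 1 : Fin d → ℝ)) s)))
    · intro s hs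
      have hpc : HasDerivAt (fun τ => p (t+τ) a)
          ((σ^2*c*(t+s)^(3*σ-1) *
            deriv (fun r : ℝ => f (Function.update (q (t+s)) a r)) (q (t+s) a)) * 1) s :=
        (hp (t+s) (hJ s hs) a).comp s (hshift s)
      rw [grad_eq hfd] at hpc
      have hu : HasDerivAt (fun τ : ℝ => σ*c/3 * ((t+τ) ^ (3*σ) - t ^ (3*σ)))
          (σ*c/3 * (3*σ * (t+s) ^ (3*σ-1))) s :=
        ((hpow (3*σ) s (hUsub hs)).sub_const (t ^ (3*σ))).const_mul (σ*c/3)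
      have hv := hΦdiff a s (hUsub hs)
      have hprod := (hu.mul hv).const_add (p t a)
      have h4 := hpc.sub hprod
      refine h4.congr_deriv ?_
      ring
    · simp
    · -- E' = O(s)
      have hmem0 : t + 0 ∈ Set.Ioo α β := by rw [add_zero]; exact htmem
      -- first summand: differentiable at 0, vanishing at 0
      have hqdiff0 : DifferentiableAt ℝ (fun τ => q (t+τ)) 0 := by
        rw [differentiableAt_pi]
        intro b
        exact ((hq (t+0) hmem0 b).comp 0 (hshift 0)).differentiableAt
      have hΨdiff0 : DifferentiableAt ℝ
          (fun τ => fderiv ℝ f (q (t+τ)) (Pi.single a 1 : Fin d → ℝ)) 0 :=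
        (((hgd _).comp 0 hqdiff0).clm_apply (differentiableAt_const _))
      have hΦdiff0 : DifferentiableAt ℝ
          (fun τ => fderiv ℝ f (si1Q d σ c t q p τ) (Pi.single a 1 : Fin d → ℝ)) 0 :=
        ((hΦcd a).differentiableOn one_ne_zero).differentiableAt (isOpen_Ioi.mem_nhds h0U)
      have hAdiff : DifferentiableAt ℝ (fun s =>
          σ^2*c*(t+s)^(3*σ-1) * fderiv ℝ f (q (t+s)) (Pi.single a 1 : Fin d → ℝ)
            - σ*c/3 * (3*σ*(t+s)^(3*σ-1)) *
              fderiv ℝ f (si1Q d σ c t q p s) (Pi.single a 1 : Fin d → ℝ)) 0 := by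
        have hr : DifferentiableAt ℝ (fun τ : ℝ => (t+τ) ^ (3*σ-1)) 0 :=
          (hpow (3*σ-1) 0 h0U).differentiableAt
        exact (((hr.const_mul (σ^2*c)).mul hΨdiff0).sub
          (((hr.const_mul (3*σ)).const_mul (σ*c/3)).mul hΦdiff0))
      have hA0 : σ^2*c*(t+0)^(3*σ-1) * fderiv ℝ f (q (t+0)) (Pi.single a 1 : Fin d → ℝ)
            - σ*c/3 * (3*σ*(t+0)^(3*σ-1)) *
              fderiv ℝ f (si1Q d σ c t q p 0) (Pi.single a 1 : Fin d → ℝ) = 0 := by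
        rw [hQ0, add_zero]
        ring
      have hAbig : (fun s =>
          σ^2*c*(t+s)^(3*σ-1) * fderiv ℝ f (q (t+s)) (Pi.single a 1 : Fin d → ℝ)
            - σ*c/3 * (3*σ*(t+s)^(3*σ-1)) *
              fderiv ℝ f (si1Q d σ c t q p s) (Pi.single a 1 : Fin d → ℝ))
          =O[nhds 0] fun s => s := by
        have hbig := hAdiff.hasFDerivAt.isBigO_sub
        exact hbig.congr (fun x => by rw [hA0, sub_zero]) (fun x => sub_zero x)
      -- second summand: O(s) · O(1)
      have hprediff : DifferentiableAt ℝ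
          (fun s : ℝ => σ*c/3 * ((t+s)^(3*σ) - t^(3*σ))) 0 :=
        (((hpow (3*σ) 0 h0U).differentiableAt).sub_const _).const_mul _
      have hpre0 : σ*c/3 * ((t+(0:ℝ))^(3*σ) - t^(3*σ)) = 0 := by
        rw [add_zero]; ring
      have hprebig : (fun s : ℝ => σ*c/3 * ((t+s)^(3*σ) - t^(3*σ)))
          =O[nhds 0] fun s => s := by
        have hbig := hprediff.hasFDerivAt.isBigO_sub
        exact hbig.congr (fun x => by rw [hpre0, sub_zero]) (fun x => sub_zero x)
      have hdΦbig : (fun s => deriv (fun τ => fderiv ℝ f (si1Q d σ c t q p τ)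
            (Pi.single a 1 : Fin d → ℝ)) s)
          =O[nhds 0] (fun _ : ℝ => (1:ℝ)) :=
        (hΦdcont a).isBigO_one ℝ
      have hBbig : (fun s => -(σ*c/3 * ((t+s)^(3*σ) - t^(3*σ)) *
            deriv (fun τ => fderiv ℝ f (si1Q d σ c t q p τ)
              (Pi.single a 1 : Fin d → ℝ)) s))
          =O[nhds 0] fun s => s := by
        have := (hprebig.mul hdΦbig).neg_left
        simpa using this
      exact hAbig.add hBbig
  -- assemble the two components
  apply Asymptotics.IsBigO.prod_left
  · rw [isBigO_pi]
    intro a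
    simpa using hQpart a
  · rw [isBigO_pi]
    intro a
    simpa using hPpart a
end
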